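/- For all m ≥ 1 and n ≥ 1, B^m(A(n)) = F_{2m+1}·A(n) + F_{2m}·n − F_{2m}, where A(n) = ⌊nφ⌋ and B(n) = ⌊nφ²⌋. -/

import Mathlib

noncomputable def phi : ℝ := (1 + Real.sqrt 5) / 2

/-- Lower Wythoff sequence. -/
noncomputable def A (n : ℕ) : ℕ := (⌊(n : ℝ) * phi⌋).toNat

/-- Upper Wythoff sequence. -/
noncomputable def B (n : ℕ) : ℕ := (⌊(n : ℝ) * phi ^ 2⌋).toNat

/-- `d` is the digit sequence of the Zeckendorf expansion of `N`:
digits are 0/1, no two consecutive 1's, finitely many nonzero digits,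
and `N = Σ dᵢ · F_{i+2}`. -/
def IsZeck (N : ℕ) (d : ℕ → ℕ) : Prop :=
  (∀ i, d i ≤ 1) ∧ (∀ i, ¬(d i = 1 ∧ d (i + 1) = 1)) ∧
  (Function.support d).Finite ∧ N = ∑ᶠ i, d i * Nat.fib (i + 2)

noncomputable def psi : ℝ := (1 - Real.sqrt 5) / 2

lemma sqrt5_sq : Real.sqrt 5 ^ 2 = 5 := Real.sq_sqrt (by norm_num)

lemma sqrt5_lt : 2 < Real.sqrt 5 ∧ Real.sqrt 5 < 3 := by
  have h := sqrt5_sq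
  have h0 := Real.sqrt_nonneg 5
  constructor <;> nlinarith

lemma phi_pos : 0 < phi := by
  have h := sqrt5_lt
  unfold phi; linarith [h.1]

lemma phi_gt_one : 1 < phi := by
  have h := sqrt5_lt
  unfold phi; linarith [h.1]

lemma psi_neg : psi < 0 := by
  have h := sqrt5_lt
  unfold psi; linarith [h.1]

lemma psi_gt : -1 < psi := by
  have h := sqrt5_lt
  unfold psi; linarith [h.2]

lemma phi_psi : phi * psi = -1 := by
  unfold phi psi
  linear_combination (-1/4 : ℝ) * sqrt5_sq

lemma psi_sq : psi ^ 2 = psi + 1 := by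
  unfold psi
  linear_combination (1/4 : ℝ) * sqrt5_sq

lemma fibphi (k : ℕ) : phi * (Nat.fib k : ℝ) = (Nat.fib (k + 1) : ℝ) - psi ^ k := by
  induction k using Nat.twoStepInduction with
  | zero => simp
  | one =>
    have h2 : (Nat.fib 2 : ℝ) = 1 := by norm_num
    rw [Nat.fib_one, h2, Nat.cast_one, pow_one, mul_one]
    unfold phi psi
    ring
  | more k ih1 ih2 =>
    rw [Nat.fib_add_two]
    have h3 : Nat.fib (k + 2 + 1) = Nat.fib (k + 1) + Nat.fib (k + 2) := by
      rw [Nat.fib_add_two]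
    rw [h3]
    push_cast
    linear_combination ih1 + ih2 + psi ^ k * psi_sq

lemma irrational_phi : Irrational phi := by
  have h5 : Irrational (Real.sqrt 5) := (by norm_num : Nat.Prime 5).irrational_sqrt
  have he : Real.sqrt 5 = 2 * phi - 1 := by unfold phi; ring
  rw [he] at h5
  by_contra h
  rw [Irrational, not_not] at h
  obtain ⟨q, hq⟩ := h
  exact h5 ⟨2 * q - 1, by push_cast; rw [hq]⟩

lemma irrational_nphi (n : ℕ) (hn : 1 ≤ n) : Irrational ((n : ℝ) * phi) := by
  have h := irrational_phi.ratCast_mul (q := (n : ℚ)) (by exact_mod_cast Nat.one_le_iff_ne_zero.mp hn)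
  rwa [Rat.cast_natCast] at h

lemma fract_pos (n : ℕ) (hn : 1 ≤ n) :
    0 < Int.fract ((n : ℝ) * phi) ∧ Int.fract ((n : ℝ) * phi) < 1 := by
  have hirr := irrational_nphi n hn
  refine ⟨?_, Int.fract_lt_one _⟩
  rcases lt_or_eq_of_le (Int.fract_nonneg ((n : ℝ) * phi)) with h | h
  · exact h
  · exfalso
    have heq : ((n : ℝ) * phi) = (⌊(n : ℝ) * phi⌋ : ℝ) := by
      have := Int.fract_add_floor ((n : ℝ) * phi)
      rw [← h] at this; linarith
    exact hirr ⟨(⌊(n : ℝ) * phi⌋ : ℚ), by rw [Rat.cast_intCast]; exact heq.symm⟩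

lemma A_cast (n : ℕ) : (A n : ℝ) = (n : ℝ) * phi - Int.fract ((n : ℝ) * phi) := by
  have h0 : (0 : ℤ) ≤ ⌊(n : ℝ) * phi⌋ := by
    apply Int.floor_nonneg.mpr
    have := phi_pos.le
    positivity
  have h1 : ((⌊(n : ℝ) * phi⌋.toNat : ℕ) : ℝ) = ((⌊(n : ℝ) * phi⌋ : ℤ) : ℝ) := by
    exact_mod_cast congrArg (fun z : ℤ => (z : ℝ)) (Int.toNat_of_nonneg h0)
  unfold A
  rw [h1, Int.self_sub_fract]

/-- key lemma -/
lemma A_key (n m : ℕ) (hn : 1 ≤ n) :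
    A (Nat.fib (2 * m + 1) * A n + Nat.fib (2 * m) * (n - 1)) =
      Nat.fib (2 * m + 2) * A n + Nat.fib (2 * m + 1) * (n - 1) := by
  obtain ⟨hf0, hf1⟩ := fract_pos n hn
  set f := Int.fract ((n : ℝ) * phi) with hf
  set x : ℕ := Nat.fib (2 * m + 1) * A n + Nat.fib (2 * m) * (n - 1) with hxdef
  set I : ℕ := Nat.fib (2 * m + 2) * A n + Nat.fib (2 * m + 1) * (n - 1) with hIdef
  have h1 := fibphi (2 * m + 1)
  simp only [show 2 * m + 1 + 1 = 2 * m + 2 from by ring] at h1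
  have h2 := fibphi (2 * m)
  have ha := A_cast n
  have hpp := phi_psi
  have hpsq := psi_sq
  have hψ0 := psi_neg
  have hψ1 := psi_gt
  have hP0 : 0 < psi ^ (2 * m) := by
    have : psi ^ (2 * m) = (psi ^ 2) ^ m := by rw [← pow_mul]
    rw [this]
    apply pow_pos
    nlinarith
  have hP1 : psi ^ (2 * m) ≤ 1 := by
    have habs : |psi| ≤ 1 := abs_le.mpr ⟨hψ1.le, by linarith⟩
    calc psi ^ (2 * m) ≤ |psi ^ (2 * m)| := le_abs_self _
      _ = |psi| ^ (2 * m) := abs_pow _ _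
      _ ≤ 1 := pow_le_one₀ (abs_nonneg _) habs
  set ε : ℝ := psi ^ (2 * m) * (1 + psi * f) with hε
  have hfac0 : 0 < 1 + psi * f := by nlinarith
  have hfac1 : 1 + psi * f < 1 := by nlinarith
  have hε0 : 0 < ε := mul_pos hP0 hfac0
  have hε1 : ε < 1 := by nlinarith
  have hx : (x : ℝ) * phi = (I : ℝ) + ε := by
    rw [hxdef, hIdef, hε]
    push_cast [Nat.cast_sub hn]
    linear_combination (A n : ℝ) * h1 + ((n : ℝ) - 1) * h2
      - psi ^ (2 * m) * psi * ha - psi ^ (2 * m) * (n : ℝ) * hpp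
  have hfloor : ⌊(x : ℝ) * phi⌋ = (I : ℤ) := by
    rw [hx]
    have hc : ((I : ℕ) : ℝ) + ε = (((I : ℕ) : ℤ) : ℝ) + ε := by push_cast; ring
    rw [hc, Int.floor_intCast_add]
    have : ⌊ε⌋ = 0 := Int.floor_eq_zero_iff.mpr ⟨hε0.le, hε1⟩
    rw [this, add_zero]
  show A x = I
  unfold A
  rw [hfloor, Int.toNat_natCast]

lemma B_eq (k : ℕ) : B k = k + A k := by
  unfold A B
  have hsq : phi ^ 2 = phi + 1 := by
    unfold phi; linear_combination (1/4 : ℝ) * sqrt5_sq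
  have hre : (k : ℝ) * phi ^ 2 = (k : ℝ) * phi + (k : ℕ) := by
    rw [hsq]; push_cast; ring
  rw [hre, Int.floor_add_natCast]
  have h0 : (0 : ℤ) ≤ ⌊(k : ℝ) * phi⌋ := by
    apply Int.floor_nonneg.mpr
    have := phi_pos.le
    positivity
  rw [Int.toNat_add h0 (by positivity)]
  simp only [Int.toNat_natCast]
  omega

theorem iterate_nat (n : ℕ) (hn : 1 ≤ n) (m : ℕ) :
    B^[m] (A n) = Nat.fib (2 * m + 1) * A n + Nat.fib (2 * m) * (n - 1) := by
  induction m with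
  | zero => simp
  | succ m ih =>
    rw [Function.iterate_succ_apply', ih, B_eq, A_key n m hn]
    have e1 : Nat.fib (2 * (m + 1) + 1) = Nat.fib (2 * m + 1) + Nat.fib (2 * m + 2) := by
      rw [show 2 * (m + 1) + 1 = 2 * m + 1 + 2 from by ring, Nat.fib_add_two,
        show 2 * m + 1 + 1 = 2 * m + 2 from by ring]
    have e2 : Nat.fib (2 * (m + 1)) = Nat.fib (2 * m) + Nat.fib (2 * m + 1) := by
      rw [show 2 * (m + 1) = 2 * m + 2 from by ring, Nat.fib_add_two]
    rw [e1, e2]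
    ring

/-- B^m(A(n)) = F_{2m+1}·A(n) + F_{2m}·n − F_{2m} for m, n ≥ 1. -/
theorem iterate_B_A_formula (m n : ℕ) (hm : 1 ≤ m) (hn : 1 ≤ n) :
    (B^[m] (A n) : ℤ) =
      Nat.fib (2 * m + 1) * (A n : ℤ) + Nat.fib (2 * m) * (n : ℤ) - Nat.fib (2 * m) := by
  rw [iterate_nat n hn m]
  push_cast [Nat.cast_sub hn]
  ring
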